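/- For the unit disk B ⊂ ℝ², define for each m ≥ 1 the eigenvalues μ_m by μ_m³ = 2m²(m+1). Then the counting function B(μ) = #{eigenvalues ≤ μ} for the second biharmonic Steklov problem on the disk (with ϱ ≡ 1) satisfies B(μ_m) = 2m + 1 = (ω₁·vol(∂B)/(2π))·(m + 1/2), where ω₁ = 2 and vol(∂B) = 2π; and since m ~ μ_m/∛2 as m → ∞, B(μ_m) ~ (ω₁·vol(∂B)/(∛16·π))·(μ_m + 1/2). -/

import Mathlib

open Real Filter

/-- For the unit disk, the second biharmonic Steklov problem has eigenvalue `μ₀ = 0`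
(multiplicity 1) and eigenvalues `μ_m` with `μ_m³ = 2m²(m+1)` of multiplicity 2 for
`m ≥ 1`.  The counting function `B(μ) = 1 + 2·#{k ≥ 1 : μ_k ≤ μ}` satisfies
`B(μ_m) = 2m + 1 = (ω₁·vol(∂B)/(2π))·(m + 1/2)` with `ω₁ = 2`, `vol(∂B) = 2π`;
and since `m ~ μ_m/∛2` as `m → ∞`,
`B(μ_m) ~ (ω₁·vol(∂B)/(∛16·π))·(μ_m + 1/2)`. -/
theorem disk_biharmonic_counting (μ : ℕ → ℝ)
    (hμ : ∀ k : ℕ, μ k = (2 * (k : ℝ) ^ 2 * ((k : ℝ) + 1)) ^ ((1 : ℝ) / 3))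
    (B : ℝ → ℕ)
    (hB : ∀ x : ℝ, B x = 1 + 2 * Nat.card {k : ℕ | 1 ≤ k ∧ μ k ≤ x}) :
    (∀ m : ℕ, 1 ≤ m →
      B (μ m) = 2 * m + 1 ∧
      (B (μ m) : ℝ) = (2 * (2 * π)) / (2 * π) * ((m : ℝ) + 1 / 2)) ∧
    Tendsto (fun m : ℕ => μ m / ((2 : ℝ) ^ ((1 : ℝ) / 3) * (m : ℝ))) atTop (nhds 1) ∧
    Tendsto (fun m : ℕ =>
        (B (μ m) : ℝ) / ((2 * (2 * π)) / ((16 : ℝ) ^ ((1 : ℝ) / 3) * π) * (μ m + 1 / 2)))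
      atTop (nhds 1) := by
  have hg : ∀ k : ℕ, (0 : ℝ) ≤ 2 * (k : ℝ) ^ 2 * ((k : ℝ) + 1) := by
    intro k; positivity
  -- monotonicity
  have hiff : ∀ k m : ℕ, (μ k ≤ μ m ↔ 2 * (k : ℝ) ^ 2 * ((k : ℝ) + 1) ≤
      2 * (m : ℝ) ^ 2 * ((m : ℝ) + 1)) := by
    intro k m
    rw [hμ k, hμ m]
    constructor
    · intro h
      by_contra hc
      push_neg at hc
      exact absurd h (not_le.mpr (Real.rpow_lt_rpow (hg m) hc (by norm_num : (0:ℝ) < 1/3)))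
    · intro h
      exact Real.rpow_le_rpow (hg k) h (by norm_num)
  have hmono : ∀ k m : ℕ, 1 ≤ k → (μ k ≤ μ m ↔ k ≤ m) := by
    intro k m hk
    rw [hiff]
    constructor
    · intro h
      by_contra hc
      push_neg at hc
      have hck : (m : ℝ) + 1 ≤ (k : ℝ) := by exact_mod_cast hc
      have hk1 : (1 : ℝ) ≤ (k : ℝ) := by exact_mod_cast hk
      nlinarith [sq_nonneg ((m : ℝ)), sq_nonneg ((k : ℝ) - (m : ℝ))]
    · intro h
      have hkm : (k : ℝ) ≤ (m : ℝ) := by exact_mod_cast h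
      have hk0 : (0 : ℝ) ≤ (k : ℝ) := Nat.cast_nonneg k
      gcongr
  -- counting
  have hBval : ∀ m : ℕ, 1 ≤ m → B (μ m) = 2 * m + 1 := by
    intro m hm
    have hset : {k : ℕ | 1 ≤ k ∧ μ k ≤ μ m} = ↑(Finset.Icc 1 m) := by
      ext k
      simp only [Set.mem_setOf_eq, Finset.coe_Icc, Set.mem_Icc]
      exact and_congr_right fun hk => hmono k m hk
    rw [hB, hset, Nat.card_coe_set_eq, Set.ncard_coe_finset, Nat.card_Icc]
    omega
  have hpi : π ≠ 0 := Real.pi_ne_zero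
  have part2 : Tendsto (fun m : ℕ => μ m / ((2 : ℝ) ^ ((1 : ℝ) / 3) * (m : ℝ)))
      atTop (nhds 1) := by
    have heq : ∀ m : ℕ, 1 ≤ m →
        μ m / ((2 : ℝ) ^ ((1 : ℝ) / 3) * (m : ℝ)) = (1 + 1 / (m : ℝ)) ^ ((1 : ℝ) / 3) := by
      intro m hm
      have hm0 : (0 : ℝ) < (m : ℝ) := by exact_mod_cast hm
      have hden : (2 : ℝ) ^ ((1 : ℝ) / 3) * (m : ℝ)
          = (2 * (m : ℝ) ^ 3) ^ ((1 : ℝ) / 3) := by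
        rw [Real.mul_rpow (by norm_num) (by positivity)]
        congr 1
        rw [← Real.rpow_natCast (m : ℝ) 3, ← Real.rpow_mul hm0.le]
        norm_num
      rw [hμ m, hden, ← Real.div_rpow (hg m) (by positivity)]
      congr 1
      field_simp
    have hlim : Tendsto (fun m : ℕ => (1 + 1 / (m : ℝ)) ^ ((1 : ℝ) / 3)) atTop (nhds 1) := by
      have h1 : Tendsto (fun m : ℕ => 1 + 1 / (m : ℝ)) atTop (nhds 1) := by
        have := tendsto_one_div_atTop_nhds_zero_nat (𝕜 := ℝ)
        simpa using (tendsto_const_nhds (x := (1 : ℝ))).add this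
      have := h1.rpow_const (p := (1 : ℝ) / 3) (Or.inl one_ne_zero)
      simpa using this
    refine hlim.congr' ?_
    filter_upwards [eventually_ge_atTop 1] with m hm
    exact (heq m hm).symm
  refine ⟨?_, part2, ?_⟩
  · intro m hm
    refine ⟨hBval m hm, ?_⟩
    rw [hBval m hm]
    push_cast
    field_simp
  · -- third part
    set c : ℝ := (2 : ℝ) ^ ((1 : ℝ) / 3) with hc
    have hc0 : (0 : ℝ) < c := by rw [hc]; positivity
    set C : ℝ := (2 * (2 * π)) / ((16 : ℝ) ^ ((1 : ℝ) / 3) * π) with hCdef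
    have h16 : (16 : ℝ) ^ ((1 : ℝ) / 3) = 2 * c := by
      rw [hc, show (16 : ℝ) = 2 ^ (4 : ℕ) by norm_num, ← Real.rpow_natCast 2 4,
        ← Real.rpow_mul (by norm_num)]
      rw [show ((4 : ℕ) : ℝ) * (1 / 3) = 1 + 1 / 3 by push_cast; norm_num,
        Real.rpow_add (by norm_num), Real.rpow_one]
    have hC2 : C * c = 2 := by
      rw [hCdef, h16]
      field_simp
    have hC0 : C ≠ 0 := by
      intro h
      rw [h, zero_mul] at hC2
      norm_num at hC2
    have hμm : Tendsto (fun m : ℕ => μ m / (m : ℝ)) atTop (nhds c) := by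
      have h := part2.mul_const c
      rw [one_mul] at h
      refine h.congr fun m => ?_
      calc μ m / (c * (m : ℝ)) * c = (c * μ m) / (c * (m : ℝ)) := by ring
        _ = μ m / (m : ℝ) := mul_div_mul_left _ _ hc0.ne'
    have hhalf : Tendsto (fun m : ℕ => 1 / (2 * (m : ℝ))) atTop (nhds 0) := by
      have h := (tendsto_one_div_atTop_nhds_zero_nat (𝕜 := ℝ)).div_const (2 : ℝ)
      rw [zero_div] at h
      refine h.congr fun m => ?_
      rw [div_div]
      ring_nf
    have hden : Tendsto (fun m : ℕ => C * (μ m / (m : ℝ) + 1 / (2 * (m : ℝ))))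
        atTop (nhds 2) := by
      have h := (hμm.add hhalf).const_mul C
      rwa [add_zero, hC2] at h
    have hnum : Tendsto (fun m : ℕ => 2 + 1 / (m : ℝ)) atTop (nhds 2) := by
      have := tendsto_one_div_atTop_nhds_zero_nat (𝕜 := ℝ)
      simpa using (tendsto_const_nhds (x := (2 : ℝ))).add this
    clear_value C c
    have hdiv := hnum.div hden (by norm_num)
    rw [show (2 : ℝ) / 2 = 1 by norm_num] at hdiv
    refine hdiv.congr' ?_
    filter_upwards [eventually_ge_atTop 1] with m hm
    show (2 + 1 / (m : ℝ)) / (C * (μ m / (m : ℝ) + 1 / (2 * (m : ℝ))))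
        = (B (μ m) : ℝ) / (C * (μ m + 1 / 2))
    have hm0 : (0 : ℝ) < (m : ℝ) := by exact_mod_cast hm
    have hμnn : 0 ≤ μ m := by
      rw [hμ m]; exact Real.rpow_nonneg (hg m) _
    rw [hBval m hm]
    push_cast
    rw [div_eq_div_iff]
    · field_simp
    · positivity
    · have : 0 < μ m + 1 / 2 := by linarith
      positivity
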